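/- Finiteness of the Cauchy intensity: for every integer n ≥ 2, every real p with 0 < p < n, and every y ∈ ℝⁿ with pairwise distinct coordinates, the Cauchy improper-mixture intensity is finite: λ_{n,p}(y) < ∞. -/

import Mathlib

open MeasureTheory
open scoped ENNReal

lemma cauchy_aux_eq (u c : ℝ) (hc : 0 < c) (x : ℝ) :
    c / (Real.pi * ((u - x) ^ 2 + c ^ 2))
      = (Real.pi * c)⁻¹ * (1 + ((x - u) * c⁻¹) ^ 2)⁻¹ := by
  have hπ := Real.pi_pos
  have h1 : (0:ℝ) < (u - x) ^ 2 + c ^ 2 := by positivity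
  have h2 : (0:ℝ) < 1 + ((x - u) * c⁻¹) ^ 2 := by positivity
  field_simp
  ring

lemma lintegral_cauchy (u c : ℝ) (hc : 0 < c) :
    ∫⁻ x : ℝ, ENNReal.ofReal (c / (Real.pi * ((u - x) ^ 2 + c ^ 2))) = 1 := by
  have hπ := Real.pi_pos
  have hint : Integrable (fun x : ℝ => (Real.pi * c)⁻¹ * (1 + ((x - u) * c⁻¹) ^ 2)⁻¹) := by
    refine Integrable.const_mul ?_ _
    exact (integrable_inv_one_add_sq.comp_mul_right' (inv_ne_zero hc.ne')).comp_sub_right u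
  have hnn : 0 ≤ᵐ[volume] fun x : ℝ => (Real.pi * c)⁻¹ * (1 + ((x - u) * c⁻¹) ^ 2)⁻¹ := by
    filter_upwards with x
    positivity
  have hval : ∫ x : ℝ, (Real.pi * c)⁻¹ * (1 + ((x - u) * c⁻¹) ^ 2)⁻¹ = 1 := by
    rw [MeasureTheory.integral_const_mul]
    have h1 : ∫ x : ℝ, (1 + ((x - u) * c⁻¹) ^ 2)⁻¹
        = ∫ x : ℝ, (1 + (x * c⁻¹) ^ 2)⁻¹ :=
      integral_sub_right_eq_self (fun x => (1 + (x * c⁻¹) ^ 2)⁻¹) u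
    have h2 : ∫ x : ℝ, (1 + (x * c⁻¹) ^ 2)⁻¹
        = |c| • ∫ x : ℝ, (1 + x ^ 2)⁻¹ :=
      MeasureTheory.Measure.integral_comp_inv_mul_right (fun x => (1 + x ^ 2)⁻¹) c
    rw [h1, h2, integral_univ_inv_one_add_sq, abs_of_pos hc, smul_eq_mul]
    field_simp
  simp_rw [cauchy_aux_eq u c hc]
  rw [← ofReal_integral_eq_lintegral_ofReal hint hnn, hval, ENNReal.ofReal_one]

/-- The Cauchy improper-mixture intensity
`λ_{n,p}(y) = ∫₀^∞ ∫_{-∞}^∞ ∏ᵢ f(yᵢ; θ₁, θ₂) θ₂^{-p} dθ₁ dθ₂`,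
where `f(u; θ₁, θ₂) = θ₂ / (π((u - θ₁)² + θ₂²))` is the Cauchy density. -/
noncomputable def cauchyIntensity (n : ℕ) (p : ℝ) (y : Fin n → ℝ) : ℝ≥0∞ :=
  ∫⁻ θ₂ in Set.Ioi (0 : ℝ), ∫⁻ θ₁ : ℝ,
    ENNReal.ofReal ((∏ i, θ₂ / (Real.pi * ((y i - θ₁) ^ 2 + θ₂ ^ 2))) * θ₂ ^ (-p))

/-- Finiteness of the Cauchy intensity: for `n ≥ 2`, `0 < p < n` and `y` with
pairwise distinct coordinates, `λ_{n,p}(y) < ∞`. -/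
theorem cauchyIntensity_finite (n : ℕ) (hn : 2 ≤ n) (p : ℝ)
    (hp0 : 0 < p) (hpn : p < (n : ℝ)) (y : Fin n → ℝ) (hy : Function.Injective y) :
    cauchyIntensity n p y < ⊤ := by
  have hπ := Real.pi_pos
  -- the minimal pairwise gap
  have hij : (⟨0, by omega⟩ : Fin n) ≠ ⟨1, by omega⟩ := by simp [Fin.ext_iff]
  set i₀ : Fin n := ⟨0, by omega⟩ with hi₀
  set s : Finset (Fin n × Fin n) := Finset.univ.filter (fun q => q.1 ≠ q.2) with hs
  have hsne : s.Nonempty := ⟨(⟨0, by omega⟩, ⟨1, by omega⟩), by simpa [hs] using hij⟩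
  set d : ℝ := s.inf' hsne (fun q => |y q.1 - y q.2|) with hdd
  have hd : 0 < d := by
    rw [hdd, Finset.lt_inf'_iff]
    rintro ⟨i, j⟩ hq
    have hne : i ≠ j := by simpa [hs] using hq
    exact abs_pos.2 (sub_ne_zero.2 fun h => hne (hy h))
  have hsep : ∀ i j : Fin n, i ≠ j → d ≤ |y i - y j| := fun i j h =>
    Finset.inf'_le (b := (i, j)) _ (by simp [hs, h])
  set r : ℝ := d / 2 with hr
  have hr0 : 0 < r := by positivity
  set B : ℝ → ℝ := fun c => min ((Real.pi * c)⁻¹) (c / (Real.pi * r ^ 2)) with hB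
  have hB0 : ∀ c : ℝ, 0 < c → 0 ≤ B c := fun c hc =>
    le_min (by positivity) (by positivity)
  -- pointwise product bound
  have key : ∀ c : ℝ, 0 < c → ∀ t : ℝ,
      (∏ i, c / (Real.pi * ((y i - t) ^ 2 + c ^ 2)))
        ≤ (∑ j, c / (Real.pi * ((y j - t) ^ 2 + c ^ 2))) * B c ^ (n - 1) := by
    intro c hc t
    set G : Fin n → ℝ := fun i => c / (Real.pi * ((y i - t) ^ 2 + c ^ 2)) with hG
    have hGnn : ∀ i, 0 ≤ G i := fun i => by
      have h : (0:ℝ) < Real.pi * ((y i - t) ^ 2 + c ^ 2) := by positivity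
      exact div_nonneg hc.le h.le
    have hGle : ∀ i, r ≤ |y i - t| → G i ≤ B c := by
      intro i hi
      have hden : (0:ℝ) < Real.pi * ((y i - t) ^ 2 + c ^ 2) := by positivity
      refine le_min ?_ ?_
      · show c / (Real.pi * ((y i - t) ^ 2 + c ^ 2)) ≤ (Real.pi * c)⁻¹
        rw [div_le_iff₀ hden]
        have h2 : (0:ℝ) < Real.pi * c := by positivity
        rw [inv_mul_eq_div, le_div_iff₀ h2]
        nlinarith [sq_nonneg (y i - t)]
      · show c / (Real.pi * ((y i - t) ^ 2 + c ^ 2)) ≤ c / (Real.pi * r ^ 2)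
        apply div_le_div_of_nonneg_left hc.le (by positivity)
        have h3 : r ^ 2 ≤ (y i - t) ^ 2 := by
          have h4 := sq_abs (y i - t)
          nlinarith [abs_nonneg (y i - t)]
        nlinarith [sq_nonneg c]
    obtain ⟨j, hj⟩ : ∃ j : Fin n, ∀ i, i ≠ j → r ≤ |y i - t| := by
      by_cases h : ∃ j, |y j - t| < r
      · obtain ⟨j, hjl⟩ := h
        refine ⟨j, fun i hijne => ?_⟩
        have h1 := hsep i j hijne
        have h2 : |y i - y j| ≤ |y i - t| + |y j - t| := by
          have h3 := abs_add_le (y i - t) (t - y j)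
          have h4 : |t - y j| = |y j - t| := abs_sub_comm _ _
          have h5 : y i - y j = (y i - t) + (t - y j) := by ring
          rw [h5]
          linarith
        have hdr : d = 2 * r := by rw [hr]; ring
        linarith
      · push_neg at h
        exact ⟨i₀, fun i _ => h i⟩
    have hcard : (Finset.univ.erase j).card = n - 1 := by
      rw [Finset.card_erase_of_mem (Finset.mem_univ j), Finset.card_univ, Fintype.card_fin]
    have hprod : ∏ i ∈ Finset.univ.erase j, G i ≤ B c ^ (n - 1) := by
      calc ∏ i ∈ Finset.univ.erase j, G i
          ≤ ∏ _i ∈ Finset.univ.erase j, B c :=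
            Finset.prod_le_prod (fun i _ => hGnn i)
              (fun i hi => hGle i (hj i (Finset.ne_of_mem_erase hi)))
        _ = B c ^ (n - 1) := by rw [Finset.prod_const, hcard]
    calc ∏ i, G i = G j * ∏ i ∈ Finset.univ.erase j, G i :=
        (Finset.mul_prod_erase Finset.univ G (Finset.mem_univ j)).symm
      _ ≤ (∑ k, G k) * B c ^ (n - 1) :=
        mul_le_mul (Finset.single_le_sum (fun k _ => hGnn k) (Finset.mem_univ j)) hprod
          (Finset.prod_nonneg fun i _ => hGnn i) (Finset.sum_nonneg fun k _ => hGnn k)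
  -- the inner integral bound
  have inner : ∀ c : ℝ, 0 < c →
      (∫⁻ t : ℝ, ENNReal.ofReal
          ((∏ i, c / (Real.pi * ((y i - t) ^ 2 + c ^ 2))) * c ^ (-p)))
        ≤ (n : ℝ≥0∞) * ENNReal.ofReal (B c ^ (n - 1) * c ^ (-p)) := by
    intro c hc
    have hGm : ∀ j : Fin n, Measurable fun t : ℝ =>
        ENNReal.ofReal (c / (Real.pi * ((y j - t) ^ 2 + c ^ 2))) := by
      intro j
      apply ENNReal.measurable_ofReal.comp
      fun_prop
    have hGnn' : ∀ (t : ℝ) (j : Fin n),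
        0 ≤ c / (Real.pi * ((y j - t) ^ 2 + c ^ 2)) := fun t j => by
      have h : (0:ℝ) < Real.pi * ((y j - t) ^ 2 + c ^ 2) := by positivity
      exact div_nonneg hc.le h.le
    have step1 : ∀ t : ℝ,
        ENNReal.ofReal ((∏ i, c / (Real.pi * ((y i - t) ^ 2 + c ^ 2))) * c ^ (-p))
          ≤ (∑ j, ENNReal.ofReal (c / (Real.pi * ((y j - t) ^ 2 + c ^ 2))))
              * ENNReal.ofReal (B c ^ (n - 1) * c ^ (-p)) := by
      intro t
      rw [← ENNReal.ofReal_sum_of_nonneg (fun j _ => hGnn' t j),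
        ← ENNReal.ofReal_mul (Finset.sum_nonneg fun j _ => hGnn' t j)]
      apply ENNReal.ofReal_le_ofReal
      calc (∏ i, c / (Real.pi * ((y i - t) ^ 2 + c ^ 2))) * c ^ (-p)
          ≤ ((∑ j, c / (Real.pi * ((y j - t) ^ 2 + c ^ 2))) * B c ^ (n - 1)) * c ^ (-p) :=
            mul_le_mul_of_nonneg_right (key c hc t) (Real.rpow_nonneg hc.le _)
        _ = (∑ j, c / (Real.pi * ((y j - t) ^ 2 + c ^ 2)))
              * (B c ^ (n - 1) * c ^ (-p)) := by ring
    calc (∫⁻ t : ℝ, ENNReal.ofReal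
            ((∏ i, c / (Real.pi * ((y i - t) ^ 2 + c ^ 2))) * c ^ (-p)))
        ≤ ∫⁻ t : ℝ, (∑ j, ENNReal.ofReal (c / (Real.pi * ((y j - t) ^ 2 + c ^ 2))))
            * ENNReal.ofReal (B c ^ (n - 1) * c ^ (-p)) := lintegral_mono step1
      _ = (∑ j : Fin n, ∫⁻ t : ℝ,
            ENNReal.ofReal (c / (Real.pi * ((y j - t) ^ 2 + c ^ 2))))
            * ENNReal.ofReal (B c ^ (n - 1) * c ^ (-p)) := by
          rw [lintegral_mul_const' _ _ ENNReal.ofReal_ne_top,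
            lintegral_finset_sum _ (fun j _ => hGm j)]
      _ = (n : ℝ≥0∞) * ENNReal.ofReal (B c ^ (n - 1) * c ^ (-p)) := by
          have hone : ∀ j : Fin n, (∫⁻ t : ℝ,
              ENNReal.ofReal (c / (Real.pi * ((y j - t) ^ 2 + c ^ 2)))) = 1 :=
            fun j => lintegral_cauchy (y j) c hc
          simp [hone]
  -- the two tail exponents
  have hn1 : ((n - 1 : ℕ) : ℝ) = (n : ℝ) - 1 := by
    rw [Nat.cast_sub (by omega), Nat.cast_one]
  have hn2 : (2:ℝ) ≤ (n:ℝ) := by exact_mod_cast hn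
  set a₁ : ℝ := ((n : ℝ) - 1) - p with ha₁def
  set a₂ : ℝ := -((n : ℝ) - 1) - p with ha₂def
  have ha₁ : -1 < a₁ := by rw [ha₁def]; linarith
  have ha₂ : a₂ < -1 := by rw [ha₂def]; linarith
  set K₁ : ℝ := ((Real.pi * r ^ 2)⁻¹) ^ (n - 1) with hK₁
  set K₂ : ℝ := (Real.pi⁻¹) ^ (n - 1) with hK₂
  have hK₁0 : 0 ≤ K₁ := by positivity
  have hK₂0 : 0 ≤ K₂ := by positivity
  -- bound on (0,1]
  have bnd1 : ∀ c ∈ Set.Ioc (0:ℝ) 1, B c ^ (n - 1) * c ^ (-p) ≤ K₁ * c ^ a₁ := by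
    rintro c ⟨hc, -⟩
    have h1 : B c ^ (n - 1) ≤ (c / (Real.pi * r ^ 2)) ^ (n - 1) :=
      pow_le_pow_left₀ (hB0 c hc) (min_le_right _ _) _
    have hc1 : c ^ (n - 1) * c ^ (-p) = c ^ a₁ := by
      rw [← Real.rpow_natCast c (n - 1), ← Real.rpow_add hc, hn1, ha₁def]
      congr 1
    calc B c ^ (n - 1) * c ^ (-p) ≤ (c / (Real.pi * r ^ 2)) ^ (n - 1) * c ^ (-p) :=
        mul_le_mul_of_nonneg_right h1 (Real.rpow_nonneg hc.le _)
      _ = ((Real.pi * r ^ 2)⁻¹) ^ (n - 1) * (c ^ (n - 1) * c ^ (-p)) := by ring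
      _ = K₁ * c ^ a₁ := by rw [hc1, hK₁]
  -- bound on (1,∞)
  have bnd2 : ∀ c ∈ Set.Ioi (1:ℝ), B c ^ (n - 1) * c ^ (-p) ≤ K₂ * c ^ a₂ := by
    intro c hc
    have hc0 : (0:ℝ) < c := lt_trans one_pos hc
    have h1 : B c ^ (n - 1) ≤ ((Real.pi * c)⁻¹) ^ (n - 1) :=
      pow_le_pow_left₀ (hB0 c hc0) (min_le_left _ _) _
    have hc1 : (c ^ (n - 1))⁻¹ * c ^ (-p) = c ^ a₂ := by
      rw [← Real.rpow_natCast c (n - 1), ← Real.rpow_neg hc0.le, ← Real.rpow_add hc0,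
        hn1, ha₂def]
      congr 1
    calc B c ^ (n - 1) * c ^ (-p) ≤ ((Real.pi * c)⁻¹) ^ (n - 1) * c ^ (-p) :=
        mul_le_mul_of_nonneg_right h1 (Real.rpow_nonneg hc0.le _)
      _ = (Real.pi⁻¹) ^ (n - 1) * ((c ^ (n - 1))⁻¹ * c ^ (-p)) := by ring
      _ = K₂ * c ^ a₂ := by rw [hc1, hK₂]
  -- finiteness of the tails
  have fin1 : ∫⁻ c in Set.Ioc (0:ℝ) 1, ENNReal.ofReal (c ^ a₁) < ⊤ := by
    have hInt : IntegrableOn (fun c : ℝ => c ^ a₁) (Set.Ioc (0:ℝ) 1) :=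
      (intervalIntegrable_iff_integrableOn_Ioc_of_le zero_le_one).mp
        (intervalIntegral.intervalIntegrable_rpow' ha₁)
    exact lt_of_le_of_lt (lintegral_ofReal_le_lintegral_enorm _) hInt.2
  have fin2 : ∫⁻ c in Set.Ioi (1:ℝ), ENNReal.ofReal (c ^ a₂) < ⊤ := by
    have hInt : IntegrableOn (fun c : ℝ => c ^ a₂) (Set.Ioi (1:ℝ)) :=
      integrableOn_Ioi_rpow_of_lt ha₂ one_pos
    exact lt_of_le_of_lt (lintegral_ofReal_le_lintegral_enorm _) hInt.2
  -- combine
  have le₁ : cauchyIntensity n p y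
      ≤ ∫⁻ c in Set.Ioi (0:ℝ), (n : ℝ≥0∞) * ENNReal.ofReal (B c ^ (n - 1) * c ^ (-p)) := by
    rw [cauchyIntensity]
    exact setLIntegral_mono' measurableSet_Ioi (fun c hc => inner c (Set.mem_Ioi.mp hc))
  have split : (∫⁻ c in Set.Ioi (0:ℝ),
        (n : ℝ≥0∞) * ENNReal.ofReal (B c ^ (n - 1) * c ^ (-p)))
      = (∫⁻ c in Set.Ioc (0:ℝ) 1, (n : ℝ≥0∞) * ENNReal.ofReal (B c ^ (n - 1) * c ^ (-p)))
        + ∫⁻ c in Set.Ioi (1:ℝ), (n : ℝ≥0∞) * ENNReal.ofReal (B c ^ (n - 1) * c ^ (-p)) := by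
    rw [← lintegral_union measurableSet_Ioi (Set.Ioc_disjoint_Ioi le_rfl),
      Set.Ioc_union_Ioi_eq_Ioi zero_le_one]
  have hnK₁ : ((n : ℝ≥0∞) * ENNReal.ofReal K₁) ≠ ⊤ :=
    ENNReal.mul_ne_top (ENNReal.natCast_ne_top n) ENNReal.ofReal_ne_top
  have hnK₂ : ((n : ℝ≥0∞) * ENNReal.ofReal K₂) ≠ ⊤ :=
    ENNReal.mul_ne_top (ENNReal.natCast_ne_top n) ENNReal.ofReal_ne_top
  have p1 : (∫⁻ c in Set.Ioc (0:ℝ) 1,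
      (n : ℝ≥0∞) * ENNReal.ofReal (B c ^ (n - 1) * c ^ (-p))) < ⊤ := by
    have hle : ∀ c ∈ Set.Ioc (0:ℝ) 1,
        (n : ℝ≥0∞) * ENNReal.ofReal (B c ^ (n - 1) * c ^ (-p))
          ≤ ((n : ℝ≥0∞) * ENNReal.ofReal K₁) * ENNReal.ofReal (c ^ a₁) := by
      intro c hc
      rw [mul_assoc, ← ENNReal.ofReal_mul hK₁0]
      exact mul_le_mul_right (ENNReal.ofReal_le_ofReal (bnd1 c hc)) _
    calc (∫⁻ c in Set.Ioc (0:ℝ) 1,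
            (n : ℝ≥0∞) * ENNReal.ofReal (B c ^ (n - 1) * c ^ (-p)))
        ≤ ∫⁻ c in Set.Ioc (0:ℝ) 1,
            ((n : ℝ≥0∞) * ENNReal.ofReal K₁) * ENNReal.ofReal (c ^ a₁) :=
          setLIntegral_mono' measurableSet_Ioc hle
      _ = ((n : ℝ≥0∞) * ENNReal.ofReal K₁)
            * ∫⁻ c in Set.Ioc (0:ℝ) 1, ENNReal.ofReal (c ^ a₁) :=
          lintegral_const_mul' _ _ hnK₁
      _ < ⊤ := ENNReal.mul_lt_top hnK₁.lt_top fin1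
  have p2 : (∫⁻ c in Set.Ioi (1:ℝ),
      (n : ℝ≥0∞) * ENNReal.ofReal (B c ^ (n - 1) * c ^ (-p))) < ⊤ := by
    have hle : ∀ c ∈ Set.Ioi (1:ℝ),
        (n : ℝ≥0∞) * ENNReal.ofReal (B c ^ (n - 1) * c ^ (-p))
          ≤ ((n : ℝ≥0∞) * ENNReal.ofReal K₂) * ENNReal.ofReal (c ^ a₂) := by
      intro c hc
      rw [mul_assoc, ← ENNReal.ofReal_mul hK₂0]
      exact mul_le_mul_right (ENNReal.ofReal_le_ofReal (bnd2 c hc)) _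
    calc (∫⁻ c in Set.Ioi (1:ℝ),
            (n : ℝ≥0∞) * ENNReal.ofReal (B c ^ (n - 1) * c ^ (-p)))
        ≤ ∫⁻ c in Set.Ioi (1:ℝ),
            ((n : ℝ≥0∞) * ENNReal.ofReal K₂) * ENNReal.ofReal (c ^ a₂) :=
          setLIntegral_mono' measurableSet_Ioi hle
      _ = ((n : ℝ≥0∞) * ENNReal.ofReal K₂)
            * ∫⁻ c in Set.Ioi (1:ℝ), ENNReal.ofReal (c ^ a₂) :=
          lintegral_const_mul' _ _ hnK₂
      _ < ⊤ := ENNReal.mul_lt_top hnK₂.lt_top fin2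
  exact lt_of_le_of_lt le₁ (by rw [split]; exact ENNReal.add_lt_top.mpr ⟨p1, p2⟩)
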